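/- Conjugacy class decomposition (Shapiro's lemma application): for a finite group G acting on a k-algebra A, the coinvariants (k[G] ⊗ A^{⊗(n+1)})_G under the G-action h·(g / a_0,…,a_n) = (hgh^{−1} / h(a_0),…,h(a_n)) decompose as a direct sum over conjugacy classes [g] of G of the coinvariants A^{⊗(n+1)}/G^g, where G^g is the centralizer of g in G acting diagonally on A^{⊗(n+1)}. -/

import Mathlib

open scoped TensorProduct DirectSum
open PiTensorProduct

abbrev Chains (k A : Type*) [CommRing k] [Ring A] [Algebra k A] (n : ℕ) :=
  ⨂[k] (_ : Fin (n + 1)), A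

/-- The diagonal action of an automorphism on `A^{⊗(n+1)}`. -/
noncomputable def tdiag {k A : Type*} [CommRing k] [Ring A] [Algebra k A] (g : A ≃ₐ[k] A)
    (n : ℕ) : Chains k A n →ₗ[k] Chains k A n :=
  PiTensorProduct.map (fun _ => g.toLinearMap)

/-- The `G`-action on `k[G] ⊗ A^{⊗(n+1)}` (realized as `G →₀ A^{⊗(n+1)}`):
`h · (g / a_0,…,a_n) = (hgh⁻¹ / h(a_0),…,h(a_n))`. -/
noncomputable def actG {k A G : Type*} [CommRing k] [Ring A] [Algebra k A] [Group G]
    (φ : G →* (A ≃ₐ[k] A)) (h : G) (n : ℕ) :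
    (G →₀ Chains k A n) →ₗ[k] (G →₀ Chains k A n) :=
  (Finsupp.lmapDomain (Chains k A n) k (fun g => h * g * h⁻¹)) ∘ₗ
    (Finsupp.mapRange.linearMap (tdiag (φ h) n))

/-- The submodule of `G`-coinvariant relations `y - h·y` in `k[G] ⊗ A^{⊗(n+1)}`. -/
noncomputable def coinvRelG {k A G : Type*} [CommRing k] [Ring A] [Algebra k A] [Group G]
    (φ : G →* (A ≃ₐ[k] A)) (n : ℕ) : Submodule k (G →₀ Chains k A n) :=
  Submodule.span k {x | ∃ (h : G) (y : G →₀ Chains k A n), x = y - actG φ h n y}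

/-- The submodule of relations for the diagonal action of the centralizer `G^g` on the
stalk `A^{⊗(n+1)}` over `g`. -/
noncomputable def centRel {k A G : Type*} [CommRing k] [Ring A] [Algebra k A] [Group G]
    (φ : G →* (A ≃ₐ[k] A)) (g : G) (n : ℕ) : Submodule k (Chains k A n) :=
  Submodule.span k
    {x | ∃ h ∈ Subgroup.centralizer {g}, ∃ y : Chains k A n, x = y - tdiag (φ h) n y}

section Aux

variable {k A G : Type*} [CommRing k] [Ring A] [Algebra k A] [Group G]

lemma tdiag_comp (g g' : A ≃ₐ[k] A) (n : ℕ) :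
    tdiag g n ∘ₗ tdiag g' n = tdiag (g * g') n := by
  unfold tdiag
  rw [← PiTensorProduct.map_comp]
  rfl

lemma tdiag_tdiag (g g' : A ≃ₐ[k] A) (n : ℕ) (x : Chains k A n) :
    tdiag g n (tdiag g' n x) = tdiag (g * g') n x := by
  rw [← LinearMap.comp_apply, tdiag_comp]

lemma tdiag_one (n : ℕ) : tdiag (1 : A ≃ₐ[k] A) n = LinearMap.id := by
  unfold tdiag
  rw [show (fun (_ : Fin (n+1)) => (1 : A ≃ₐ[k] A).toLinearMap) =
    (fun (_ : Fin (n+1)) => (LinearMap.id : A →ₗ[k] A)) from rfl, PiTensorProduct.map_id]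

lemma actG_single (φ : G →* (A ≃ₐ[k] A)) (h g : G) (n : ℕ) (m : Chains k A n) :
    actG φ h n (Finsupp.single g m) = Finsupp.single (h * g * h⁻¹) (tdiag (φ h) n m) := by
  rw [actG, LinearMap.comp_apply, Finsupp.mapRange.linearMap_apply,
    Finsupp.mapRange_single, Finsupp.lmapDomain_apply, Finsupp.mapDomain_single]

lemma out_isConj (g : G) : IsConj (Quotient.out (ConjClasses.mk g)) g := by
  rw [← ConjClasses.mk_eq_mk_iff_isConj]
  exact Quotient.out_eq' _

/-- a chosen conjugator from the class representative to `g`. -/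
noncomputable def sfun (g : G) : G :=
  Classical.choose (isConj_iff.mp (out_isConj g))

lemma sfun_spec (g : G) : sfun g * Quotient.out (ConjClasses.mk g) * (sfun g)⁻¹ = g :=
  Classical.choose_spec (isConj_iff.mp (out_isConj g))

lemma mkQ_tdiag_cent (φ : G →* (A ≃ₐ[k] A)) (g₀ : G) (n : ℕ) {h : G}
    (hh : h ∈ Subgroup.centralizer {g₀}) (y : Chains k A n) :
    (centRel φ g₀ n).mkQ (tdiag (φ h) n y) = (centRel φ g₀ n).mkQ y := by
  rw [Submodule.mkQ_apply, Submodule.mkQ_apply, Submodule.Quotient.eq]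
  have hmem : y - tdiag (φ h) n y ∈ centRel φ g₀ n := Submodule.subset_span ⟨h, hh, y, rfl⟩
  rw [show tdiag (φ h) n y - y = -(y - tdiag (φ h) n y) by abel]
  exact neg_mem hmem

end Aux

set_option maxHeartbeats 1000000 in
/-- for a finite group `G` acting on `A`, the `G`-coinvariants of
`k[G] ⊗ A^{⊗(n+1)}` (action `h·(g/a) = (hgh⁻¹/h(a))`) decompose, by Shapiro's lemma, as a
direct sum over the conjugacy classes `[g]` of `G` of the coinvariants `A^{⊗(n+1)}/G^g`,
where `G^g` is the centralizer of `g` acting diagonally. -/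
theorem conjugacy_class_decomposition (k A G : Type*) [CommRing k] [Ring A] [Algebra k A]
    [Group G] [Fintype G] (φ : G →* (A ≃ₐ[k] A)) (n : ℕ) :
    Nonempty (((G →₀ Chains k A n) ⧸ coinvRelG φ n) ≃ₗ[k]
      (⨁ c : ConjClasses G, (Chains k A n ⧸ centRel φ (Quotient.out c) n))) := by
  classical
  set M := Chains k A n
  set N : ConjClasses G → Type _ := fun c => M ⧸ centRel φ (Quotient.out c) n with hN
  set Fb : (G →₀ M) →ₗ[k] ⨁ c, N c :=
    Finsupp.lsum k (fun g => (DirectSum.lof k (ConjClasses G) N (ConjClasses.mk g)) ∘ₗ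
      (centRel φ (Quotient.out (ConjClasses.mk g)) n).mkQ ∘ₗ tdiag (φ (sfun g)⁻¹) n) with hFb
  have hFb_single : ∀ (g : G) (m : M), Fb (Finsupp.single g m) =
      DirectSum.lof k (ConjClasses G) N (ConjClasses.mk g)
        ((centRel φ (Quotient.out (ConjClasses.mk g)) n).mkQ (tdiag (φ (sfun g)⁻¹) n m)) := by
    intro g m
    rw [hFb, Finsupp.lsum_single, LinearMap.comp_apply, LinearMap.comp_apply]
  have hFb_inv : ∀ h : G, Fb ∘ₗ actG φ h n = Fb := by
    intro h
    apply Finsupp.lhom_ext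
    intro g m
    rw [LinearMap.comp_apply, actG_single, hFb_single, hFb_single]
    have hc : ConjClasses.mk (h * g * h⁻¹) = ConjClasses.mk g := by
      rw [ConjClasses.mk_eq_mk_iff_isConj]
      exact isConj_iff.mpr ⟨h⁻¹, by group⟩
    have hsg' := sfun_spec (h * g * h⁻¹)
    rw [hc] at hsg' ⊢
    have hsg := sfun_spec g
    generalize hs : sfun g = s at *
    generalize hs' : sfun (h * g * h⁻¹) = s' at *
    set o := Quotient.out (ConjClasses.mk g) with ho
    congr 1
    have key : (s'⁻¹ * h * s) * o * (s'⁻¹ * h * s)⁻¹ = o := by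
      have e1 : (s'⁻¹ * h * s) * o * (s'⁻¹ * h * s)⁻¹
          = s'⁻¹ * (h * (s * o * s⁻¹) * h⁻¹) * s' := by group
      rw [e1, hsg, ← hsg']
      group
    have hcen : s'⁻¹ * h * s ∈ Subgroup.centralizer {o} := by
      rw [Subgroup.mem_centralizer_singleton_iff]
      conv_rhs => rw [← key]
      group
    have step : tdiag (φ s'⁻¹) n (tdiag (φ h) n m)
        = tdiag (φ (s'⁻¹ * h * s)) n (tdiag (φ s⁻¹) n m) := by
      rw [tdiag_tdiag, tdiag_tdiag, ← _root_.map_mul, ← _root_.map_mul]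
      congr 2
      group
    rw [step]
    exact mkQ_tdiag_cent φ _ n hcen _
  have hker : coinvRelG φ n ≤ LinearMap.ker Fb := by
    rw [coinvRelG, Submodule.span_le]
    rintro x ⟨h, y, rfl⟩
    simp only [SetLike.mem_coe, LinearMap.mem_ker, map_sub]
    rw [show Fb (actG φ h n y) = (Fb ∘ₗ actG φ h n) y from rfl, hFb_inv h, sub_self]
  set F : ((G →₀ M) ⧸ coinvRelG φ n) →ₗ[k] ⨁ c, N c :=
    @Submodule.liftQ k (G →₀ M) _ _ _ (coinvRelG φ n) k (⨁ c, N c) _ _ _ (RingHom.id k) Fb hker with hF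
  have hkerB : ∀ c : ConjClasses G, centRel φ (Quotient.out c) n ≤
      LinearMap.ker ((coinvRelG φ n).mkQ ∘ₗ Finsupp.lsingle (Quotient.out c)) := by
    intro c
    rw [centRel, Submodule.span_le]
    rintro x ⟨h, hh, y, rfl⟩
    simp only [SetLike.mem_coe, LinearMap.mem_ker, LinearMap.comp_apply, Finsupp.lsingle_apply]
    rw [Finsupp.single_sub, Submodule.mkQ_apply, Submodule.Quotient.mk_eq_zero]
    have hco : h * Quotient.out c * h⁻¹ = Quotient.out c := by
      rw [Subgroup.mem_centralizer_singleton_iff] at hh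
      rw [hh]; group
    have : Finsupp.single (Quotient.out c) (tdiag (φ h) n y) =
        actG φ h n (Finsupp.single (Quotient.out c) y) := by
      rw [actG_single, hco]
    rw [this]
    exact Submodule.subset_span ⟨h, _, rfl⟩
  set B : (⨁ c, N c) →ₗ[k] ((G →₀ M) ⧸ coinvRelG φ n) :=
    DirectSum.toModule k (ConjClasses G) _
      (fun c => Submodule.liftQ _ ((coinvRelG φ n).mkQ ∘ₗ Finsupp.lsingle (Quotient.out c))
        (hkerB c)) with hB
  have hB_lof : ∀ (c : ConjClasses G) (m : M),
      B (DirectSum.lof k (ConjClasses G) N c ((centRel φ (Quotient.out c) n).mkQ m)) =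
        (coinvRelG φ n).mkQ (Finsupp.single (Quotient.out c) m) := by
    intro c m
    rw [hB, DirectSum.toModule_lof]
    rfl
  have hFB : F ∘ₗ B = LinearMap.id := by
    apply DirectSum.linearMap_ext
    intro c
    apply LinearMap.ext
    intro x
    obtain ⟨m, rfl⟩ := Submodule.mkQ_surjective (centRel φ (Quotient.out c) n) x
    simp only [LinearMap.comp_apply, Submodule.mkQ_apply, LinearMap.id_apply]
    rw [show ((Submodule.Quotient.mk m : N c)) =
      (centRel φ (Quotient.out c) n).mkQ m from rfl]
    rw [hB_lof, hF]
    rw [show F ((coinvRelG φ n).mkQ (Finsupp.single (Quotient.out c) m)) =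
      Fb (Finsupp.single (Quotient.out c) m) from rfl]
    rw [hFb_single]
    have hc : ConjClasses.mk (Quotient.out c) = c := Quotient.out_eq' c
    have hs := sfun_spec (Quotient.out c)
    rw [hc] at hs ⊢
    generalize hsd : sfun (Quotient.out c) = s at *
    set o := Quotient.out c with ho
    have h1 : s * o = o * s := by
      conv_rhs => rw [← hs]
      group
    have hcen : s⁻¹ ∈ Subgroup.centralizer {o} := by
      rw [Subgroup.mem_centralizer_singleton_iff]
      have h2 : s⁻¹ * o = s⁻¹ * (o * s) * s⁻¹ := by group
      rw [h2, ← h1]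
      group
    rw [mkQ_tdiag_cent φ _ n hcen m]
  have hBF : B ∘ₗ F = LinearMap.id := by
    apply Submodule.linearMap_qext
    apply Finsupp.lhom_ext
    intro g m
    simp only [LinearMap.comp_apply, Submodule.mkQ_apply, LinearMap.id_apply]
    rw [show F (Submodule.Quotient.mk (Finsupp.single g m)) = Fb (Finsupp.single g m) from rfl,
      hFb_single, hB_lof]
    rw [Submodule.mkQ_apply, Submodule.Quotient.eq]
    set Y := Finsupp.single (Quotient.out (ConjClasses.mk g)) (tdiag (φ (sfun g)⁻¹) n m) with hY
    have hact : actG φ (sfun g) n Y = Finsupp.single g m := by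
      rw [hY, actG_single, sfun_spec, tdiag_tdiag, ← _root_.map_mul, mul_inv_cancel, _root_.map_one, tdiag_one]
      rfl
    have : Y - Finsupp.single g m = Y - actG φ (sfun g) n Y := by rw [hact]
    rw [this]
    exact Submodule.subset_span ⟨sfun g, Y, rfl⟩
  exact ⟨LinearEquiv.ofLinear F B hFB hBF⟩
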